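/- arXiv:2311.08578 — 3 statements merged into one kernel-verified Lean document; each statement's English description precedes it below -/
import Mathlib

section
/- Let α : ℝ → ℝ be three times continuously differentiable on an open interval I with α'(t) > 0 for all t ∈ I, and let q : ℝ → ℝ be continuous on I. Suppose α satisfies Kummer's equation q(t) − (α'(t))² + (3/4)(α''(t)/α'(t))² − (1/2) α'''(t)/α'(t) = 0 on I. Then for any a ∈ I, the function y(t) = (α'(t))^{−1/2} cos(α(t)) satisfies y''(t) + q(t) y(t) = 0 on I. -/
theorem kummer_gives_solution (A B : ℝ) (α q : ℝ → ℝ)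
    (hα : ContDiffOn ℝ 3 α (Set.Ioo A B))
    (hpos : ∀ t ∈ Set.Ioo A B, 0 < deriv α t)
    (hq : ContinuousOn q (Set.Ioo A B))
    (hkummer : ∀ t ∈ Set.Ioo A B,
      q t - (deriv α t) ^ 2 + (3 / 4) * (deriv (deriv α) t / deriv α t) ^ 2
        - (1 / 2) * (deriv (deriv (deriv α)) t / deriv α t) = 0)
    (a : ℝ) (ha : a ∈ Set.Ioo A B)
    (y : ℝ → ℝ) (hy : y = fun t => Real.cos (α t) / Real.sqrt (deriv α t)) :
    ∀ t ∈ Set.Ioo A B, deriv (deriv y) t + q t * y t = 0 := by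
  have hop : IsOpen (Set.Ioo A B) := isOpen_Ioo
  have hf : ContDiffOn ℝ 2 (deriv α) (Set.Ioo A B) :=
    hα.deriv_of_isOpen hop (by norm_num)
  have hf1 : ContDiffOn ℝ 1 (deriv (deriv α)) (Set.Ioo A B) :=
    hf.deriv_of_isOpen hop (by norm_num)
  have hdα : ∀ t ∈ Set.Ioo A B, HasDerivAt α (deriv α t) t := fun t ht =>
    ((hα.differentiableOn (by norm_num)).differentiableAt (hop.mem_nhds ht)).hasDerivAt
  have hdf : ∀ t ∈ Set.Ioo A B, HasDerivAt (deriv α) (deriv (deriv α) t) t := fun t ht =>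
    ((hf.differentiableOn (by norm_num)).differentiableAt (hop.mem_nhds ht)).hasDerivAt
  have hdf1 : ∀ t ∈ Set.Ioo A B, HasDerivAt (deriv (deriv α)) (deriv (deriv (deriv α)) t) t :=
    fun t ht =>
    ((hf1.differentiableOn (by norm_num)).differentiableAt (hop.mem_nhds ht)).hasDerivAt
  set Y1 : ℝ → ℝ := fun t =>
    (-Real.sin (α t) * deriv α t * Real.sqrt (deriv α t)
      - Real.cos (α t) * (deriv (deriv α) t / (2 * Real.sqrt (deriv α t))))
      / Real.sqrt (deriv α t) ^ 2 with hY1def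
  have hsne : ∀ t ∈ Set.Ioo A B, Real.sqrt (deriv α t) ≠ 0 := fun t ht =>
    ne_of_gt (Real.sqrt_pos.mpr (hpos t ht))
  have hsqrt : ∀ t ∈ Set.Ioo A B, HasDerivAt (fun u => Real.sqrt (deriv α u))
      (deriv (deriv α) t / (2 * Real.sqrt (deriv α t))) t := fun t ht =>
    (hdf t ht).sqrt (ne_of_gt (hpos t ht))
  have hY1 : ∀ t ∈ Set.Ioo A B, HasDerivAt y (Y1 t) t := by
    intro t ht
    have h1 : HasDerivAt (fun u => Real.cos (α u)) (-Real.sin (α t) * deriv α t) t :=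
      (hdα t ht).cos
    have := h1.div (hsqrt t ht) (hsne t ht)
    rw [hy]
    exact this
  intro t ht
  have heq : deriv y =ᶠ[nhds t] Y1 :=
    Filter.eventually_of_mem (hop.mem_nhds ht) (fun u hu => (hY1 u hu).deriv)
  -- second derivative of Y1 at t
  have h1 : HasDerivAt (fun u => Real.sin (α u)) (Real.cos (α t) * deriv α t) t := (hdα t ht).sin
  have h2 : HasDerivAt (fun u => Real.cos (α u)) (-Real.sin (α t) * deriv α t) t := (hdα t ht).cos
  have hden : HasDerivAt (fun u => 2 * Real.sqrt (deriv α u))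
      (2 * (deriv (deriv α) t / (2 * Real.sqrt (deriv α t)))) t := (hsqrt t ht).const_mul 2
  have hN : HasDerivAt (fun u => -Real.sin (α u) * deriv α u * Real.sqrt (deriv α u)
      - Real.cos (α u) * (deriv (deriv α) u / (2 * Real.sqrt (deriv α u))))
      (((-(Real.cos (α t) * deriv α t) * deriv α t
          + -Real.sin (α t) * deriv (deriv α) t) * Real.sqrt (deriv α t)
        + -Real.sin (α t) * deriv α t * (deriv (deriv α) t / (2 * Real.sqrt (deriv α t))))
       - ((-Real.sin (α t) * deriv α t) * (deriv (deriv α) t / (2 * Real.sqrt (deriv α t)))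
        + Real.cos (α t) * ((deriv (deriv (deriv α)) t * (2 * Real.sqrt (deriv α t))
            - deriv (deriv α) t * (2 * (deriv (deriv α) t / (2 * Real.sqrt (deriv α t)))))
           / (2 * Real.sqrt (deriv α t)) ^ 2))) t := by
    exact ((h1.neg.mul (hdf t ht)).mul (hsqrt t ht)).sub
      (h2.mul ((hdf1 t ht).div hden (by
        simpa using hsne t ht)))
  have hD : HasDerivAt (fun u => Real.sqrt (deriv α u) ^ 2)
      ((2 : ℕ) * Real.sqrt (deriv α t) ^ 1 * (deriv (deriv α) t / (2 * Real.sqrt (deriv α t)))) t :=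
    (hsqrt t ht).pow 2
  have hE := hN.div hD (pow_ne_zero 2 (hsne t ht))
  have h2nd : deriv (deriv y) t = _ := (Filter.EventuallyEq.deriv_eq heq).trans hE.deriv
  rw [h2nd, hy]
  beta_reduce
  set s := Real.sqrt (deriv α t) with hs_def
  have hspos : 0 < s := Real.sqrt_pos.mpr (hpos t ht)
  have hF : deriv α t = s ^ 2 := (Real.sq_sqrt (hpos t ht).le).symm
  have hk := hkummer t ht
  rw [hF] at hk ⊢
  have hq' : q t = (s ^ 2) ^ 2 - 3 / 4 * (deriv (deriv α) t / s ^ 2) ^ 2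
      + 1 / 2 * (deriv (deriv (deriv α)) t / s ^ 2) := by linarith
  rw [hq']
  have hs0 : s ≠ 0 := ne_of_gt hspos
  field_simp
  ring
end

section
/- Let α : ℝ → ℝ be three times continuously differentiable on an open interval I with α'(t) > 0 on I, and let q : ℝ → ℝ be continuous on I. Define ψ(t) = i α(t) − (1/2) log(α'(t)). Then ψ satisfies the Riccati equation ψ''(t) + (ψ'(t))² + q(t) = 0 on I if and only if α satisfies Kummer's equation q(t) − (α'(t))² + (3/4)(α''(t)/α'(t))² − (1/2) α'''(t)/α'(t) = 0 on I. -/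
theorem riccati_iff_kummer (A B : ℝ) (α q : ℝ → ℝ)
    (hα : ContDiffOn ℝ 3 α (Set.Ioo A B))
    (hpos : ∀ t ∈ Set.Ioo A B, 0 < deriv α t)
    (hq : ContinuousOn q (Set.Ioo A B))
    (ψ : ℝ → ℂ)
    (hψ : ψ = fun t =>
      Complex.I * (α t : ℂ) - (1 / 2 : ℂ) * (Real.log (deriv α t) : ℂ)) :
    (∀ t ∈ Set.Ioo A B,
        deriv (deriv ψ) t + (deriv ψ t) ^ 2 + (q t : ℂ) = 0)
      ↔ (∀ t ∈ Set.Ioo A B,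
        q t - (deriv α t) ^ 2 + (3 / 4) * (deriv (deriv α) t / deriv α t) ^ 2
          - (1 / 2) * (deriv (deriv (deriv α)) t / deriv α t) = 0) := by
  have hopen : IsOpen (Set.Ioo A B) := isOpen_Ioo
  have hα1 : ContDiffOn ℝ 2 (deriv α) (Set.Ioo A B) :=
    hα.deriv_of_isOpen hopen (by norm_num)
  have hα2 : ContDiffOn ℝ 1 (deriv (deriv α)) (Set.Ioo A B) :=
    hα1.deriv_of_isOpen hopen (by norm_num)
  have h1 : ∀ s ∈ Set.Ioo A B, HasDerivAt α (deriv α s) s := fun s hs =>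
    ((hα.differentiableOn (by norm_num)).differentiableAt (hopen.mem_nhds hs)).hasDerivAt
  have h2 : ∀ s ∈ Set.Ioo A B, HasDerivAt (deriv α) (deriv (deriv α) s) s := fun s hs =>
    ((hα1.differentiableOn (by norm_num)).differentiableAt (hopen.mem_nhds hs)).hasDerivAt
  have h3 : ∀ s ∈ Set.Ioo A B,
      HasDerivAt (deriv (deriv α)) (deriv (deriv (deriv α)) s) s := fun s hs =>
    ((hα2.differentiableOn (by norm_num)).differentiableAt (hopen.mem_nhds hs)).hasDerivAt
  -- first derivative of ψ
  have hψ' : ∀ s ∈ Set.Ioo A B, HasDerivAt ψ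
      (Complex.I * ((deriv α s : ℝ) : ℂ)
        - (1 / 2 : ℂ) * ((deriv (deriv α) s / deriv α s : ℝ) : ℂ)) s := by
    intro s hs
    rw [hψ]
    have hlog : HasDerivAt (fun u => Real.log (deriv α u))
        (deriv (deriv α) s / deriv α s) s :=
      (h2 s hs).log (hpos s hs).ne'
    exact (((h1 s hs).ofReal_comp).const_mul Complex.I).sub
      (hlog.ofReal_comp.const_mul (1 / 2 : ℂ))
  have key : ∀ t ∈ Set.Ioo A B,
      deriv (deriv ψ) t + (deriv ψ t) ^ 2 + (q t : ℂ)
        = ((q t - (deriv α t) ^ 2 + (3 / 4) * (deriv (deriv α) t / deriv α t) ^ 2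
          - (1 / 2) * (deriv (deriv (deriv α)) t / deriv α t) : ℝ) : ℂ) := by
    intro t ht
    set a := deriv α t with ha_def
    set b := deriv (deriv α) t
    set c := deriv (deriv (deriv α)) t
    have ha : a ≠ 0 := (hpos t ht).ne'
    have hd1 : deriv ψ t = Complex.I * (a : ℂ) - (1 / 2 : ℂ) * ((b / a : ℝ) : ℂ) :=
      (hψ' t ht).deriv
    have heq : deriv ψ =ᶠ[nhds t] fun s =>
        Complex.I * ((deriv α s : ℝ) : ℂ)
          - (1 / 2 : ℂ) * ((deriv (deriv α) s / deriv α s : ℝ) : ℂ) := by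
      filter_upwards [hopen.mem_nhds ht] with s hs using (hψ' s hs).deriv
    have hquot : HasDerivAt (fun s => deriv (deriv α) s / deriv α s)
        ((c * a - b * b) / a ^ 2) t :=
      (h3 t ht).div (h2 t ht) ha
    have hd2' : HasDerivAt (fun s =>
        Complex.I * ((deriv α s : ℝ) : ℂ)
          - (1 / 2 : ℂ) * ((deriv (deriv α) s / deriv α s : ℝ) : ℂ))
        (Complex.I * (b : ℂ) - (1 / 2 : ℂ) * (((c * a - b * b) / a ^ 2 : ℝ) : ℂ)) t :=
      (((h2 t ht).ofReal_comp).const_mul Complex.I).sub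
        (hquot.ofReal_comp.const_mul (1 / 2 : ℂ))
    have hd2 : deriv (deriv ψ) t
        = Complex.I * (b : ℂ) - (1 / 2 : ℂ) * (((c * a - b * b) / a ^ 2 : ℝ) : ℂ) := by
      rw [heq.deriv_eq]; exact hd2'.deriv
    rw [hd1, hd2]
    have haC : (a : ℂ) ≠ 0 := Complex.ofReal_ne_zero.mpr ha
    push_cast
    field_simp
    ring_nf
    simp [Complex.I_sq]
    ring
  constructor
  · intro h t ht
    have := (key t ht) ▸ h t ht
    exact_mod_cast this
  · intro h t ht
    rw [key t ht, h t ht, Complex.ofReal_zero]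
end

section
/- Let q : ℝ → ℝ be continuous and strictly positive on an open interval I, and let α : ℝ → ℝ be C³ on I with α' > 0 satisfying Kummer's equation q(t) = (α'(t))² − (3/4)(α''(t)/α'(t))² + (1/2) α'''(t)/α'(t) on I. Then for any a ∈ I, the two functions u(t) = (α'(t))^{−1/2} cos(α(t)) and v(t) = (α'(t))^{−1/2} sin(α(t)) satisfy the equation y'' + q y = 0 on I and their Wronskian u v' − u' v equals 1 identically on I. -/
open Set Real

/-- First derivative of `f ∘ α / √(α')`. -/
lemma kummer_first_deriv (A B : ℝ) (α : ℝ → ℝ)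
    (hα : ContDiffOn ℝ 3 α (Set.Ioo A B))
    (hpos : ∀ t ∈ Set.Ioo A B, 0 < deriv α t)
    (f g : ℝ → ℝ) (hfg : ∀ x, HasDerivAt f (g x) x) :
    ∀ t ∈ Set.Ioo A B,
      HasDerivAt (fun t => f (α t) / Real.sqrt (deriv α t))
        (g (α t) * Real.sqrt (deriv α t)
          - f (α t) * deriv (deriv α) t / (2 * deriv α t * Real.sqrt (deriv α t))) t := by
  intro t ht
  have hs : IsOpen (Set.Ioo A B) := isOpen_Ioo
  have hP : 0 < deriv α t := hpos t ht
  have hG : 0 < Real.sqrt (deriv α t) := Real.sqrt_pos.2 hP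
  have hG2 : Real.sqrt (deriv α t) ^ 2 = deriv α t := Real.sq_sqrt hP.le
  have hA : HasDerivAt α (deriv α t) t :=
    ((hα.differentiableOn (by norm_num)).differentiableAt (hs.mem_nhds ht)).hasDerivAt
  have hα1 : ContDiffOn ℝ 2 (deriv α) (Set.Ioo A B) :=
    hα.deriv_of_isOpen hs (by norm_num)
  have hP' : HasDerivAt (deriv α) (deriv (deriv α) t) t :=
    ((hα1.differentiableOn (by norm_num)).differentiableAt (hs.mem_nhds ht)).hasDerivAt
  have hGd : HasDerivAt (fun t => Real.sqrt (deriv α t))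
      (deriv (deriv α) t / (2 * Real.sqrt (deriv α t))) t := by
    have := (Real.hasDerivAt_sqrt hP.ne').comp t hP'
    exact this.congr_deriv (by ring)
  have hfα : HasDerivAt (fun t => f (α t)) (g (α t) * deriv α t) t :=
    (hfg (α t)).comp t hA
  have := hfα.div hGd hG.ne'
  refine this.congr_deriv ?_
  rw [hG2]
  field_simp
  -- done

/-- Second derivative statement. -/
lemma kummer_second_deriv (A B : ℝ) (α : ℝ → ℝ)
    (hα : ContDiffOn ℝ 3 α (Set.Ioo A B))
    (hpos : ∀ t ∈ Set.Ioo A B, 0 < deriv α t)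
    (f g : ℝ → ℝ) (hfg : ∀ x, HasDerivAt f (g x) x) (hgf : ∀ x, HasDerivAt g (-f x) x) :
    ∀ t ∈ Set.Ioo A B,
      deriv (deriv (fun t => f (α t) / Real.sqrt (deriv α t))) t
        = -(((deriv α t) ^ 2
            - (3 / 4) * (deriv (deriv α) t / deriv α t) ^ 2
            + (1 / 2) * (deriv (deriv (deriv α)) t / deriv α t))
          * (f (α t) / Real.sqrt (deriv α t))) := by
  intro t ht
  have hs : IsOpen (Set.Ioo A B) := isOpen_Ioo
  have hW := kummer_first_deriv A B α hα hpos f g hfg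
  -- deriv of the first derivative equals deriv of the closed-form W
  set W : ℝ → ℝ := fun t => g (α t) * Real.sqrt (deriv α t)
      - f (α t) * deriv (deriv α) t / (2 * deriv α t * Real.sqrt (deriv α t)) with hWdef
  have hEq : deriv (fun t => f (α t) / Real.sqrt (deriv α t)) =ᶠ[nhds t] W := by
    filter_upwards [hs.mem_nhds ht] with x hx using (hW x hx).deriv
  rw [hEq.deriv_eq]
  -- now compute deriv W t
  have hP : 0 < deriv α t := hpos t ht
  have hG : 0 < Real.sqrt (deriv α t) := Real.sqrt_pos.2 hP
  have hG2 : Real.sqrt (deriv α t) ^ 2 = deriv α t := Real.sq_sqrt hP.le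
  have hA : HasDerivAt α (deriv α t) t :=
    ((hα.differentiableOn (by norm_num)).differentiableAt (hs.mem_nhds ht)).hasDerivAt
  have hα1 : ContDiffOn ℝ 2 (deriv α) (Set.Ioo A B) :=
    hα.deriv_of_isOpen hs (by norm_num)
  have hα2 : ContDiffOn ℝ 1 (deriv (deriv α)) (Set.Ioo A B) :=
    hα1.deriv_of_isOpen hs (by norm_num)
  have hP' : HasDerivAt (deriv α) (deriv (deriv α) t) t :=
    ((hα1.differentiableOn (by norm_num)).differentiableAt (hs.mem_nhds ht)).hasDerivAt
  have hP'' : HasDerivAt (deriv (deriv α)) (deriv (deriv (deriv α)) t) t :=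
    ((hα2.differentiableOn (by norm_num)).differentiableAt (hs.mem_nhds ht)).hasDerivAt
  have hGd : HasDerivAt (fun t => Real.sqrt (deriv α t))
      (deriv (deriv α) t / (2 * Real.sqrt (deriv α t))) t := by
    have := (Real.hasDerivAt_sqrt hP.ne').comp t hP'
    exact this.congr_deriv (by ring)
  have hfα : HasDerivAt (fun t => f (α t)) (g (α t) * deriv α t) t :=
    (hfg (α t)).comp t hA
  have hgα : HasDerivAt (fun t => g (α t)) (-f (α t) * deriv α t) t :=
    (hgf (α t)).comp t hA
  have hnum : HasDerivAt (fun t => f (α t) * deriv (deriv α) t)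
      (g (α t) * deriv α t * deriv (deriv α) t + f (α t) * deriv (deriv (deriv α)) t) t :=
    hfα.mul hP''
  have hden : HasDerivAt (fun t => 2 * deriv α t * Real.sqrt (deriv α t))
      (2 * deriv (deriv α) t * Real.sqrt (deriv α t)
        + 2 * deriv α t * (deriv (deriv α) t / (2 * Real.sqrt (deriv α t)))) t := by
    exact (hP'.const_mul 2).mul hGd
  have hdenne : 2 * deriv α t * Real.sqrt (deriv α t) ≠ 0 := by positivity
  have hWd : HasDerivAt W
      ((-f (α t) * deriv α t * Real.sqrt (deriv α t)
          + g (α t) * (deriv (deriv α) t / (2 * Real.sqrt (deriv α t))))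
        - ((g (α t) * deriv α t * deriv (deriv α) t + f (α t) * deriv (deriv (deriv α)) t)
              * (2 * deriv α t * Real.sqrt (deriv α t))
            - f (α t) * deriv (deriv α) t
              * (2 * deriv (deriv α) t * Real.sqrt (deriv α t)
                + 2 * deriv α t * (deriv (deriv α) t / (2 * Real.sqrt (deriv α t)))))
          / (2 * deriv α t * Real.sqrt (deriv α t)) ^ 2) t :=
    (hgα.mul hGd).sub (hnum.div hden hdenne)
  rw [hWd.deriv]
  have hGne := hG.ne'
  set s := Real.sqrt (deriv α t) with hsdef
  rw [← hG2]
  field_simp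
  ring

theorem kummer_gives_basis (A B : ℝ) (q α : ℝ → ℝ)
    (hq : ContinuousOn q (Set.Ioo A B))
    (hqpos : ∀ t ∈ Set.Ioo A B, 0 < q t)
    (hα : ContDiffOn ℝ 3 α (Set.Ioo A B))
    (hpos : ∀ t ∈ Set.Ioo A B, 0 < deriv α t)
    (hkummer : ∀ t ∈ Set.Ioo A B,
      q t = (deriv α t) ^ 2
        - (3 / 4) * (deriv (deriv α) t / deriv α t) ^ 2
        + (1 / 2) * (deriv (deriv (deriv α)) t / deriv α t))
    (a : ℝ) (ha : a ∈ Set.Ioo A B)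
    (u v : ℝ → ℝ)
    (hu : u = fun t => Real.cos (α t) / Real.sqrt (deriv α t))
    (hv : v = fun t => Real.sin (α t) / Real.sqrt (deriv α t)) :
    (∀ t ∈ Set.Ioo A B, deriv (deriv u) t + q t * u t = 0) ∧
    (∀ t ∈ Set.Ioo A B, deriv (deriv v) t + q t * v t = 0) ∧
    (∀ t ∈ Set.Ioo A B, u t * deriv v t - deriv u t * v t = 1) := by
  subst hu hv
  have hcos : ∀ x, HasDerivAt Real.cos (-Real.sin x) x := Real.hasDerivAt_cos
  have hcos' : ∀ x, HasDerivAt (fun x => -Real.sin x) (-Real.cos x) x :=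
    fun x => (Real.hasDerivAt_sin x).neg
  have hsin : ∀ x, HasDerivAt Real.sin (Real.cos x) x := Real.hasDerivAt_sin
  have hcos2 : ∀ x, HasDerivAt Real.cos (-Real.sin x) x := Real.hasDerivAt_cos
  refine ⟨?_, ?_, ?_⟩
  · intro t ht
    rw [kummer_second_deriv A B α hα hpos Real.cos (fun x => -Real.sin x) hcos hcos' t ht,
      hkummer t ht]
    ring
  · intro t ht
    rw [kummer_second_deriv A B α hα hpos Real.sin Real.cos hsin hcos2 t ht, hkummer t ht]
    ring
  · intro t ht
    have hdu := (kummer_first_deriv A B α hα hpos Real.cos (fun x => -Real.sin x) hcos t ht).deriv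
    have hdv := (kummer_first_deriv A B α hα hpos Real.sin Real.cos hsin t ht).deriv
    rw [hdu, hdv]
    beta_reduce
    have hP : 0 < deriv α t := hpos t ht
    have hG : 0 < Real.sqrt (deriv α t) := Real.sqrt_pos.2 hP
    have hG2 : Real.sqrt (deriv α t) ^ 2 = deriv α t := Real.sq_sqrt hP.le
    have hGne := hG.ne'
    set s := Real.sqrt (deriv α t) with hsdef
    rw [← hG2]
    field_simp
    linear_combination (2 * s ^ 4) * Real.sin_sq_add_cos_sq (α t)
end
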